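/- arXiv:2002.03255 — 5 statements merged into one kernel-verified Lean document; each statement's English description precedes it below -/
import Mathlib

section
/- Let B ⊂ ℕ be a finite nonempty set. Then (1/N) ∑_{n=1}^N | ∑_{q∈B} 1_{q∣n} − ∑_{q∈B} 1/q |² = ∑_{q∈B} ∑_{q'∈B} (gcd(q,q')−1)/(q·q') + O(|B|²/N), where the implied constant is absolute. -/
open Finset

theorem stmt_5 :
    ∃ C : ℝ, 0 < C ∧ ∀ (B : Finset ℕ), B.Nonempty → (∀ q ∈ B, 0 < q) →
      ∀ N : ℕ, 1 ≤ N →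
        |(1 / (N : ℝ)) * ∑ n ∈ Icc 1 N,
            (∑ q ∈ B, (if q ∣ n then (1 : ℝ) else 0) - ∑ q ∈ B, (1 : ℝ) / q) ^ 2
          - ∑ q ∈ B, ∑ q' ∈ B, ((Nat.gcd q q' : ℝ) - 1) / (q * q')|
        ≤ C * (B.card : ℝ) ^ 2 / N := by
  refine ⟨3, by norm_num, ?_⟩
  intro B hB hBpos N hN
  have hN0 : (0:ℝ) < N := by exact_mod_cast hN
  set μ : ℝ := ∑ q ∈ B, (1:ℝ)/q with hμdef
  -- counting lemma
  have hcount : ∀ d : ℕ, ∑ n ∈ Icc 1 N, (if d ∣ n then (1:ℝ) else 0) = ((N / d : ℕ) : ℝ) := by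
    intro d
    rw [Finset.sum_boole]
    norm_cast
    rw [show Icc 1 N = Ioc 0 N from Finset.Icc_add_one_left_eq_Ioc 0 N]
    exact Nat.Ioc_filter_dvd_card_eq_div N d
  -- error bound lemma
  have he : ∀ d : ℕ, 0 < d → |((N / d : ℕ):ℝ)/N - 1/d| ≤ 1/N := by
    intro d hd
    have hd0 : (0:ℝ) < d := by exact_mod_cast hd
    have key : (d:ℝ) * ((N/d : ℕ):ℝ) + ((N % d : ℕ):ℝ) = N := by
      exact_mod_cast Nat.div_add_mod N d
    have hr : ((N % d : ℕ):ℝ) < d := by exact_mod_cast Nat.mod_lt N hd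
    have hr0 : (0:ℝ) ≤ ((N % d : ℕ):ℝ) := by positivity
    have heq : ((N / d : ℕ):ℝ)/N - 1/d = -(((N % d : ℕ):ℝ)/(d*N)) := by
      rw [div_sub_div _ _ hN0.ne' hd0.ne', neg_div', ← key]
      ring_nf
    rw [heq, abs_neg, abs_of_nonneg (by positivity)]
    rw [div_le_div_iff₀ (by positivity) hN0]
    nlinarith
  -- expansion of the square, pointwise
  have expand : ∀ n : ℕ, (∑ q ∈ B, (if q ∣ n then (1:ℝ) else 0) - μ)^2
      = (∑ q ∈ B, ∑ q' ∈ B, (if Nat.lcm q q' ∣ n then (1:ℝ) else 0))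
        - 2*μ*(∑ q ∈ B, (if q ∣ n then (1:ℝ) else 0)) + μ^2 := by
    intro n
    have hsq : (∑ q ∈ B, (if q ∣ n then (1:ℝ) else 0))^2
        = ∑ q ∈ B, ∑ q' ∈ B, (if Nat.lcm q q' ∣ n then (1:ℝ) else 0) := by
      rw [sq, Finset.sum_mul_sum]
      refine Finset.sum_congr rfl fun q _ => Finset.sum_congr rfl fun q' _ => ?_
      by_cases h1 : q ∣ n <;> by_cases h2 : q' ∣ n <;> simp [h1, h2, Nat.lcm_dvd_iff]
    rw [sub_sq, hsq]; ring
  -- sum over n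
  have hsum : ∑ n ∈ Icc 1 N, (∑ q ∈ B, (if q ∣ n then (1:ℝ) else 0) - μ)^2
      = (∑ q ∈ B, ∑ q' ∈ B, ((N / Nat.lcm q q' : ℕ) : ℝ))
        - 2*μ*(∑ q ∈ B, ((N / q : ℕ) : ℝ)) + N*μ^2 := by
    rw [Finset.sum_congr rfl fun n _ => expand n]
    rw [Finset.sum_add_distrib, Finset.sum_sub_distrib]
    congr 1
    · congr 1
      · rw [Finset.sum_comm]
        refine Finset.sum_congr rfl fun q _ => ?_
        rw [Finset.sum_comm]
        exact Finset.sum_congr rfl fun q' _ => hcount _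
      · rw [← Finset.mul_sum, Finset.sum_comm]
        congr 1
        exact Finset.sum_congr rfl fun q _ => hcount _
    · rw [Finset.sum_const, Nat.card_Icc]
      simp [nsmul_eq_mul]
  -- rewrite the target sum
  have hT : ∑ q ∈ B, ∑ q' ∈ B, ((Nat.gcd q q' : ℝ) - 1) / (q * q')
      = (∑ q ∈ B, ∑ q' ∈ B, (1:ℝ)/(Nat.lcm q q')) - μ^2 := by
    have : ∀ q ∈ B, ∀ q' ∈ B, ((Nat.gcd q q' : ℝ) - 1) / (q * q')
        = (1:ℝ)/(Nat.lcm q q') - (1/q) * (1/q') := by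
      intro q hq q' hq'
      have hq0 : (0:ℝ) < q := by exact_mod_cast hBpos q hq
      have hq'0 : (0:ℝ) < q' := by exact_mod_cast hBpos q' hq'
      have hl : 0 < Nat.lcm q q' := Nat.pos_of_ne_zero (by
        simp [Nat.lcm_ne_zero, (hBpos q hq).ne', (hBpos q' hq').ne'])
      have hl0 : (0:ℝ) < (Nat.lcm q q' : ℝ) := by exact_mod_cast hl
      have hgl : ((Nat.gcd q q' : ℕ):ℝ) * ((Nat.lcm q q' : ℕ):ℝ) = (q:ℝ) * q' := by
        exact_mod_cast Nat.gcd_mul_lcm q q'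
      field_simp
      linear_combination hgl
    rw [Finset.sum_congr rfl fun q hq => Finset.sum_congr rfl fun q' hq' => this q hq q' hq']
    rw [hμdef, sq, Finset.sum_mul_sum, ← Finset.sum_sub_distrib]
    exact Finset.sum_congr rfl fun q _ => Finset.sum_sub_distrib _ _
  -- put it together
  rw [hsum, hT]
  have hE : (1 / (N:ℝ)) * ((∑ q ∈ B, ∑ q' ∈ B, ((N / Nat.lcm q q' : ℕ) : ℝ))
        - 2*μ*(∑ q ∈ B, ((N / q : ℕ) : ℝ)) + N*μ^2)
      - ((∑ q ∈ B, ∑ q' ∈ B, (1:ℝ)/(Nat.lcm q q')) - μ^2)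
    = (∑ q ∈ B, ∑ q' ∈ B, (((N / Nat.lcm q q' : ℕ):ℝ)/N - 1/(Nat.lcm q q')))
      - 2*μ*(∑ q ∈ B, (((N / q : ℕ):ℝ)/N - 1/q)) := by
    simp only [Finset.sum_sub_distrib, ← Finset.sum_div, ← hμdef]
    field_simp
    ring
  rw [hE]
  set X := ∑ q ∈ B, ∑ q' ∈ B, (((N / Nat.lcm q q' : ℕ):ℝ)/N - 1/(Nat.lcm q q')) with hX
  set Y := ∑ q ∈ B, (((N / q : ℕ):ℝ)/N - 1/q) with hY
  have hμ0 : 0 ≤ μ := Finset.sum_nonneg fun q _ => by positivity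
  have hμle : μ ≤ (B.card : ℝ) := by
    rw [hμdef]
    calc ∑ q ∈ B, (1:ℝ)/q ≤ ∑ q ∈ B, 1 := by
          refine Finset.sum_le_sum fun q hq => ?_
          have h1 : (1:ℝ) ≤ q := by exact_mod_cast hBpos q hq
          rw [div_le_one (by linarith)]
          exact h1
      _ = B.card := by simp
  have hXb : |X| ≤ (B.card : ℝ)^2 * (1/N) := by
    calc |X| ≤ ∑ q ∈ B, |∑ q' ∈ B, (((N / Nat.lcm q q' : ℕ):ℝ)/N - 1/(Nat.lcm q q'))| :=
          Finset.abs_sum_le_sum_abs _ _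
      _ ≤ ∑ q ∈ B, ∑ q' ∈ B, |((N / Nat.lcm q q' : ℕ):ℝ)/N - 1/(Nat.lcm q q')| :=
          Finset.sum_le_sum fun q _ => Finset.abs_sum_le_sum_abs _ _
      _ ≤ ∑ q ∈ B, ∑ q' ∈ B, 1/(N:ℝ) := by
          refine Finset.sum_le_sum fun q hq => Finset.sum_le_sum fun q' hq' => ?_
          exact he _ (Nat.pos_of_ne_zero (by
            simp [Nat.lcm_ne_zero, (hBpos q hq).ne', (hBpos q' hq').ne']))
      _ = (B.card : ℝ)^2 * (1/N) := by
          simp [Finset.sum_const, nsmul_eq_mul]; ring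
  have hYb : |Y| ≤ (B.card : ℝ) * (1/N) := by
    calc |Y| ≤ ∑ q ∈ B, |((N / q : ℕ):ℝ)/N - 1/q| := Finset.abs_sum_le_sum_abs _ _
      _ ≤ ∑ q ∈ B, 1/(N:ℝ) := Finset.sum_le_sum fun q hq => he _ (hBpos q hq)
      _ = (B.card : ℝ) * (1/N) := by simp [Finset.sum_const, nsmul_eq_mul]
  have habs : |X - 2*μ*Y| ≤ |X| + 2*μ*|Y| := by
    calc |X - 2*μ*Y| ≤ |X| + |2*μ*Y| := abs_sub _ _
      _ = |X| + 2*μ*|Y| := by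
          rw [abs_mul, abs_mul, abs_of_nonneg hμ0, abs_of_nonneg (by norm_num : (0:ℝ) ≤ 2)]
  have hmul : μ * (B.card : ℝ) ≤ (B.card : ℝ) * (B.card : ℝ) :=
    mul_le_mul_of_nonneg_right hμle (by positivity)
  have hNinv : (0:ℝ) < 1/N := by positivity
  calc |X - 2*μ*Y| ≤ |X| + 2*μ*|Y| := habs
    _ ≤ (B.card : ℝ)^2 * (1/N) + 2*μ*((B.card : ℝ) * (1/N)) := by
        gcongr
    _ ≤ 3 * (B.card : ℝ)^2 / N := by
        have h3 : 3 * (B.card : ℝ)^2 / N = 3 * ((B.card:ℝ)*(B.card:ℝ)) * (1/N) := by ring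
        rw [h3, sq]
        nlinarith [mul_le_mul_of_nonneg_right hmul hNinv.le]
end

section
/- For any finite set of primes P, limsup_{N→∞} (1/N) ∑_{n=1}^N | ∑_{p∈P} 1_{p∣n} − ∑_{p∈P} 1/p |² ≤ C · ∑_{p∈P} 1/p for an absolute constant C. -/
open Filter Finset

lemma sum_ind (d N : ℕ) :
    (∑ n ∈ Icc 1 N, (if d ∣ n then (1 : ℝ) else 0)) = ((N / d : ℕ) : ℝ) := by
  rw [show Icc 1 N = Ioc 0 N from Finset.Icc_add_one_left_eq_Ioc 0 N, Finset.sum_boole,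
    Nat.Ioc_filter_dvd_card_eq_div]

lemma A_tendsto (d : ℕ) (hd : 0 < d) :
    Tendsto (fun N : ℕ => (1 / (N : ℝ)) * ∑ n ∈ Icc 1 N, (if d ∣ n then (1 : ℝ) else 0))
      atTop (nhds (1 / (d : ℝ))) := by
  have hd' : (0 : ℝ) < d := by exact_mod_cast hd
  have hlim : Tendsto (fun N : ℕ => 1 / (d : ℝ) - 1 / N) atTop (nhds (1 / (d : ℝ))) := by
    simpa using (tendsto_const_nhds (x := 1 / (d : ℝ))).sub (tendsto_one_div_atTop_nhds_zero_nat : Tendsto (fun n : ℕ => 1 / (n : ℝ)) atTop (nhds 0))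
  refine tendsto_of_tendsto_of_tendsto_of_le_of_le' hlim tendsto_const_nhds ?_ ?_
  · filter_upwards [eventually_ge_atTop 1] with N hN
    have hN' : (0 : ℝ) < N := by exact_mod_cast hN
    rw [sum_ind]
    have h1 : (N : ℝ) < ((N / d : ℕ) + 1) * d := by
      have := Nat.div_add_mod N d
      have hm : N % d < d := Nat.mod_lt _ hd
      have : (N : ℝ) = d * (N / d : ℕ) + (N % d : ℕ) := by exact_mod_cast this.symm
      rw [this]
      have : ((N % d : ℕ) : ℝ) < d := by exact_mod_cast hm
      nlinarith
    have h2 : (N : ℝ) / d - 1 ≤ ((N / d : ℕ) : ℝ) := by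
      rw [div_sub_one hd'.ne', div_le_iff₀ hd']
      nlinarith
    rw [one_div_mul_eq_div, le_div_iff₀ hN']
    have : (1 / (d : ℝ) - 1 / N) * N = N / d - 1 := by field_simp
    rw [this]; exact h2
  · filter_upwards [eventually_ge_atTop 1] with N hN
    have hN' : (0 : ℝ) < N := by exact_mod_cast hN
    rw [sum_ind, one_div_mul_eq_div, div_le_iff₀ hN']
    have := Nat.cast_div_le (α := ℝ) (m := N) (n := d)
    calc ((N / d : ℕ) : ℝ) ≤ (N : ℝ) / d := this
    _ = 1 / d * N := by field_simp
    _ = 1 / ↑d * ↑N := rfl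

theorem stmt_6 :
    ∃ C : ℝ, 0 < C ∧ ∀ (P : Finset ℕ), (∀ p ∈ P, Nat.Prime p) →
      Filter.limsup (fun N : ℕ => (1 / (N : ℝ)) * ∑ n ∈ Icc 1 N,
          (∑ p ∈ P, (if p ∣ n then (1 : ℝ) else 0) - ∑ p ∈ P, (1 : ℝ) / p) ^ 2)
        atTop
      ≤ C * ∑ p ∈ P, (1 : ℝ) / p := by
  refine ⟨1, one_pos, fun P hP => ?_⟩
  set μ : ℝ := ∑ p ∈ P, (1 : ℝ) / p with hμ
  have hμ0 : 0 ≤ μ := Finset.sum_nonneg fun p hp => by positivity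
  set L : ℝ := (∑ p ∈ P, ∑ q ∈ P, (1 : ℝ) / (Nat.lcm p q)) - μ ^ 2 with hL
  have hpos : ∀ p ∈ P, 0 < p := fun p hp => (hP p hp).pos
  -- the sequence tends to L
  have htend : Tendsto (fun N : ℕ => (1 / (N : ℝ)) * ∑ n ∈ Icc 1 N,
      (∑ p ∈ P, (if p ∣ n then (1 : ℝ) else 0) - μ) ^ 2) atTop (nhds L) := by
    have key : Tendsto (fun N : ℕ =>
        (∑ p ∈ P, ∑ q ∈ P, (1 / (N : ℝ)) * ∑ n ∈ Icc 1 N,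
          (if Nat.lcm p q ∣ n then (1 : ℝ) else 0))
        - 2 * μ * (∑ p ∈ P, (1 / (N : ℝ)) * ∑ n ∈ Icc 1 N, (if p ∣ n then (1 : ℝ) else 0))
        + μ ^ 2) atTop (nhds L) := by
      have h1 : Tendsto (fun N : ℕ => ∑ p ∈ P, ∑ q ∈ P, (1 / (N : ℝ)) * ∑ n ∈ Icc 1 N,
          (if Nat.lcm p q ∣ n then (1 : ℝ) else 0)) atTop
          (nhds (∑ p ∈ P, ∑ q ∈ P, (1 : ℝ) / (Nat.lcm p q))) := by
        refine tendsto_finset_sum _ fun p hp => tendsto_finset_sum _ fun q hq => ?_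
        exact A_tendsto _ (Nat.lcm_pos (hpos p hp) (hpos q hq))
      have h2 : Tendsto (fun N : ℕ => ∑ p ∈ P, (1 / (N : ℝ)) * ∑ n ∈ Icc 1 N,
          (if p ∣ n then (1 : ℝ) else 0)) atTop (nhds μ) := by
        refine tendsto_finset_sum _ fun p hp => A_tendsto _ (hpos p hp)
      have T := (h1.sub ((tendsto_const_nhds (x := 2 * μ)).mul h2)).add
        (tendsto_const_nhds (x := μ ^ 2))
      have heq : (∑ p ∈ P, ∑ q ∈ P, (1 : ℝ) / (Nat.lcm p q)) - 2 * μ * μ + μ ^ 2 = L := by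
        rw [hL]; ring
      rw [← heq]; exact T
    refine key.congr' ?_
    filter_upwards [eventually_ge_atTop 1] with N hN
    have hN' : (0 : ℝ) < N := by exact_mod_cast hN
    -- pointwise algebraic identity
    have expand : ∀ n : ℕ, (∑ p ∈ P, (if p ∣ n then (1 : ℝ) else 0) - μ) ^ 2
        = (∑ p ∈ P, ∑ q ∈ P, (if Nat.lcm p q ∣ n then (1 : ℝ) else 0))
          - 2 * μ * (∑ p ∈ P, (if p ∣ n then (1 : ℝ) else 0)) + μ ^ 2 := by
      intro n
      have hsq : (∑ p ∈ P, (if p ∣ n then (1 : ℝ) else 0)) ^ 2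
          = ∑ p ∈ P, ∑ q ∈ P, (if Nat.lcm p q ∣ n then (1 : ℝ) else 0) := by
        rw [sq, Finset.sum_mul_sum]
        refine Finset.sum_congr rfl fun p hp => Finset.sum_congr rfl fun q hq => ?_
        by_cases h1 : p ∣ n <;> by_cases h2 : q ∣ n <;>
          simp [h1, h2, Nat.lcm_dvd_iff]
      rw [sub_sq, hsq]; ring
    symm
    rw [Finset.sum_congr rfl fun n _ => expand n]
    have e1 : (∑ n ∈ Icc 1 N, ∑ p ∈ P, ∑ q ∈ P, (if Nat.lcm p q ∣ n then (1 : ℝ) else 0))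
        = ∑ p ∈ P, ∑ q ∈ P, ∑ n ∈ Icc 1 N, (if Nat.lcm p q ∣ n then (1 : ℝ) else 0) := by
      rw [Finset.sum_comm]
      exact Finset.sum_congr rfl fun p _ => Finset.sum_comm
    have e2 : (∑ n ∈ Icc 1 N, ∑ p ∈ P, (if p ∣ n then (1 : ℝ) else 0))
        = ∑ p ∈ P, ∑ n ∈ Icc 1 N, (if p ∣ n then (1 : ℝ) else 0) := Finset.sum_comm
    rw [Finset.sum_add_distrib, Finset.sum_sub_distrib, Finset.sum_const, Nat.card_Icc, e1]
    simp only [← Finset.mul_sum]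
    rw [e2]
    have hc : (N + 1 - 1) = N := by omega
    rw [hc, nsmul_eq_mul]
    field_simp
  rw [htend.limsup_eq, one_mul]
  -- L ≤ μ
  have hbound : (∑ p ∈ P, ∑ q ∈ P, (1 : ℝ) / (Nat.lcm p q)) ≤ μ ^ 2 + μ := by
    have : ∀ p ∈ P, ∀ q ∈ P, (1 : ℝ) / (Nat.lcm p q)
        ≤ 1 / (p * q : ℕ) + (if p = q then 1 / (p : ℝ) else 0) := by
      intro p hp q hq
      by_cases h : p = q
      · subst h
        rw [Nat.lcm_self, if_pos rfl]
        have hp' : (0 : ℝ) < p := by exact_mod_cast hpos p hp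
        have h0 : (1 : ℝ) / (p * p : ℕ) ≥ 0 := by positivity
        linarith
      · rw [Nat.Coprime.lcm_eq_mul (Nat.coprime_primes (hP p hp) (hP q hq) |>.mpr h),
          if_neg h, add_zero]
    calc (∑ p ∈ P, ∑ q ∈ P, (1 : ℝ) / (Nat.lcm p q))
        ≤ ∑ p ∈ P, ∑ q ∈ P, ((1 : ℝ) / (p * q : ℕ) + (if p = q then 1 / (p : ℝ) else 0)) :=
          Finset.sum_le_sum fun p hp => Finset.sum_le_sum fun q hq => this p hp q hq
      _ = μ ^ 2 + μ := by
          rw [Finset.sum_congr rfl fun p _ => Finset.sum_add_distrib, Finset.sum_add_distrib]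
          congr 1
          · rw [sq, Finset.sum_mul_sum]
            refine Finset.sum_congr rfl fun p hp => Finset.sum_congr rfl fun q hq => ?_
            push_cast; rw [div_mul_div_comm, one_mul]
          · exact Finset.sum_congr rfl fun p hp => by rw [Finset.sum_ite_eq P p _, if_pos hp]
  rw [hL]; linarith
end

section
/- There is a constant C such that for all real x ≥ 2, the number of primes in (1, x] satisfies π(x) ≥ (log 2)·x/log x − C. -/
open Real

lemma key_nat (n : ℕ) (hn : 1 ≤ n) :
    4 ^ n ≤ (2 * n) * (2 * n) ^ (Nat.primeCounting (2 * n)) := by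
  have h2n : 0 < 2 * n := by omega
  have h1 : Nat.centralBinom n ≤ (2 * n) ^ (Nat.primeCounting (2 * n)) := by
    rw [← Nat.prod_pow_factorization_centralBinom n]
    have heq : ∏ p ∈ Finset.range (2 * n + 1), p ^ (Nat.centralBinom n).factorization p
        = ∏ p ∈ (2 * n + 1).primesBelow, p ^ (Nat.centralBinom n).factorization p := by
      refine (Finset.prod_subset (fun p hp => Finset.mem_range.mpr (Nat.lt_of_mem_primesBelow hp)) ?_).symm
      intro p hp hnp
      have : ¬ p.Prime := by
        intro hpp
        exact hnp (Nat.mem_primesBelow.mpr ⟨Finset.mem_range.mp hp, hpp⟩)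
      simp [Nat.factorization_eq_zero_of_not_prime _ this]
    rw [heq]
    calc ∏ p ∈ (2 * n + 1).primesBelow, p ^ (Nat.centralBinom n).factorization p
        ≤ (2 * n) ^ (2 * n + 1).primesBelow.card := by
          apply Finset.prod_le_pow_card
          intro p _
          exact Nat.pow_factorization_choose_le h2n
      _ = (2 * n) ^ (Nat.primeCounting (2 * n)) := by
          rw [Nat.primesBelow_card_eq_primeCounting']
          rfl
  calc 4 ^ n ≤ 2 * n * Nat.centralBinom n :=
        Nat.four_pow_le_two_mul_self_mul_centralBinom n hn
    _ ≤ 2 * n * (2 * n) ^ (Nat.primeCounting (2 * n)) := Nat.mul_le_mul_left _ h1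

lemma key_real (n : ℕ) (hn : 1 ≤ n) :
    (Nat.primeCounting (2 * n) : ℝ) ≥
      Real.log 2 * ((2 * n : ℕ) : ℝ) / Real.log ((2 * n : ℕ) : ℝ) - 1 := by
  set m : ℕ := 2 * n with hm
  have hm2 : (2 : ℝ) ≤ m := by
    have : 2 ≤ m := by omega
    exact_mod_cast this
  have hlogm : 0 < Real.log m := Real.log_pos (by linarith)
  have h := key_nat n hn
  have hr : (4 : ℝ) ^ n ≤ (m : ℝ) ^ (Nat.primeCounting m + 1) := by
    have : ((4 ^ n : ℕ) : ℝ) ≤ ((m * m ^ (Nat.primeCounting m) : ℕ) : ℝ) := by exact_mod_cast h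
    push_cast at this
    rw [pow_succ]
    calc (4:ℝ)^n ≤ m * m ^ (Nat.primeCounting m) := this
      _ = m ^ (Nat.primeCounting m) * m := by ring
  have hlog := Real.log_le_log (by positivity) hr
  rw [Real.log_pow, Real.log_pow] at hlog
  have h4 : Real.log 4 = 2 * Real.log 2 := by
    rw [show (4:ℝ) = 2^2 by norm_num, Real.log_pow]; push_cast; ring
  rw [h4] at hlog
  -- n * (2 * log 2) ≤ (π m + 1) * log m
  have hmn : (m : ℝ) = 2 * n := by exact_mod_cast hm
  push_cast at hlog
  have key : Real.log 2 * m ≤ ((Nat.primeCounting m : ℝ) + 1) * Real.log m := by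
    calc Real.log 2 * (m : ℝ) = (n : ℝ) * (2 * Real.log 2) := by rw [hmn]; ring
      _ ≤ ((Nat.primeCounting m : ℝ) + 1) * Real.log m := hlog
  rw [ge_iff_le, sub_le_iff_le_add, div_le_iff₀ hlogm]
  nlinarith [key]

theorem stmt_10 :
    ∃ C : ℝ, ∀ x : ℝ, 2 ≤ x →
      (Nat.primeCounting ⌊x⌋₊ : ℝ) ≥ Real.log 2 * x / Real.log x - C := by
  use 3
  intro x hx
  set n : ℕ := ⌊x / 2⌋₊ with hn
  have hn1 : 1 ≤ n := by
    rw [hn]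
    exact Nat.le_floor (by linarith)
  set m : ℕ := 2 * n with hm
  have hmx : (m : ℝ) ≤ x := by
    have h1 : (n : ℝ) ≤ x / 2 := Nat.floor_le (by linarith)
    have h2 : (m : ℝ) = 2 * n := by exact_mod_cast hm
    linarith
  have hxm : x < m + 2 := by
    have h1 : x / 2 < n + 1 := Nat.lt_floor_add_one _
    have h2 : (m : ℝ) = 2 * n := by exact_mod_cast hm
    linarith
  have hm2 : (2 : ℝ) ≤ m := by
    have : 2 ≤ m := by omega
    exact_mod_cast this
  have hlogm : 0 < Real.log m := Real.log_pos (by linarith)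
  have hlogx : 0 < Real.log x := Real.log_pos (by linarith)
  have hlogmx : Real.log m ≤ Real.log x := Real.log_le_log (by linarith) hmx
  have hmono : (Nat.primeCounting m : ℝ) ≤ Nat.primeCounting ⌊x⌋₊ := by
    have hmfloor : m ≤ ⌊x⌋₊ := Nat.le_floor hmx
    exact_mod_cast Nat.monotone_primeCounting hmfloor
  have hk := key_real n hn1
  rw [← hm] at hk
  have hlog2 : (0:ℝ) < Real.log 2 := Real.log_pos (by norm_num)
  -- chain of divisions
  have h1 : Real.log 2 * m / Real.log m ≥ Real.log 2 * m / Real.log x := by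
    apply div_le_div_of_nonneg_left _ hlogm hlogmx
    positivity
  have h2 : Real.log 2 * m / Real.log x ≥ Real.log 2 * x / Real.log x - 2 := by
    rw [ge_iff_le, sub_le_iff_le_add, div_le_iff₀ hlogx, add_mul, div_mul_cancel₀ _ hlogx.ne']
    have : Real.log 2 ≤ Real.log x := Real.log_le_log (by norm_num) hx
    nlinarith [hlog2]
  linarith [hk, hmono, h1, h2]
end

section
/- There exists x₀ ≥ 1 such that for all real x ≥ x₀, the number of primes in (8^x, 8^{x+1}] is at least 8^x/x. -/
open Finset Real

-- Chebyshev lower bound ingredient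
lemma lemA (N : ℕ) (hN : 8 ≤ N) :
    2 ^ (N - 1) ≤ N ^ (Nat.primeCounting' (N + 1) + 1) := by
  set n := N / 2 with hn
  have hn4 : 4 ≤ n := by omega
  have h1 := Nat.four_pow_lt_mul_centralBinom n hn4
  have h2 : Nat.centralBinom n ≤ (2 * n) ^ Nat.primeCounting' (2 * n + 1) := by
    rw [← Nat.prod_pow_factorization_centralBinom n, ← Nat.primesBelow_card_eq_primeCounting']
    have hfil : (∏ p ∈ Finset.range (2 * n + 1), p ^ (Nat.centralBinom n).factorization p)
        = ∏ p ∈ (Finset.range (2 * n + 1)).filter Nat.Prime,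
            p ^ (Nat.centralBinom n).factorization p := by
      refine (Finset.prod_filter_of_ne ?_).symm
      intro p _ hne
      by_contra hnp
      exact hne (by rw [Nat.factorization_eq_zero_of_not_prime _ hnp, pow_zero])
    rw [hfil, Nat.primesBelow]
    apply Finset.prod_le_pow_card
    intro p _
    have := Nat.pow_factorization_choose_le (p := p) (n := 2 * n) (k := n) (by omega)
    rwa [Nat.centralBinom]
  calc 2 ^ (N - 1) ≤ 4 ^ n := by
        rw [show (4:ℕ) = 2^2 by norm_num, ← pow_mul]
        exact Nat.pow_le_pow_right (by norm_num) (by omega)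
    _ ≤ n * Nat.centralBinom n := h1.le
    _ ≤ n * (2 * n) ^ Nat.primeCounting' (2 * n + 1) :=
        Nat.mul_le_mul_left n h2
    _ ≤ N * N ^ Nat.primeCounting' (N + 1) := by
        refine Nat.mul_le_mul (by omega) ?_
        calc (2 * n) ^ Nat.primeCounting' (2 * n + 1)
            ≤ N ^ Nat.primeCounting' (2 * n + 1) :=
              Nat.pow_le_pow_left (by omega) _
          _ ≤ N ^ Nat.primeCounting' (N + 1) :=
              Nat.pow_le_pow_right (by omega)
                (Nat.monotone_primeCounting' (by omega))
    _ = N ^ (Nat.primeCounting' (N + 1) + 1) := by ring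

lemma lemB (m M : ℕ) :
    m ^ ((Finset.range (M + 1)).filter (fun p => Nat.Prime p ∧ m < p)).card ≤ 4 ^ M := by
  calc m ^ ((Finset.range (M + 1)).filter (fun p => Nat.Prime p ∧ m < p)).card
      ≤ ∏ p ∈ (Finset.range (M + 1)).filter (fun p => Nat.Prime p ∧ m < p), p := by
        apply Finset.pow_card_le_prod
        intro p hp
        simp only [Finset.mem_filter] at hp
        exact hp.2.2.le
    _ ≤ ∏ p ∈ (Finset.range (M + 1)).filter (fun p => Nat.Prime p), p := by
        apply Finset.prod_le_prod_of_subset_of_one_le'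
        · intro p hp
          simp only [Finset.mem_filter] at hp ⊢
          exact ⟨hp.1, hp.2.1⟩
        · intro p hp _
          simp only [Finset.mem_filter] at hp
          exact hp.2.one_lt.le
    _ = primorial M := rfl
    _ ≤ 4 ^ M := primorial_le_4_pow M

lemma lemC (m M : ℕ) :
    Nat.primeCounting' (M + 1) ≤ m + 1 +
      ((Finset.range (M + 1)).filter (fun p => Nat.Prime p ∧ m < p)).card := by
  rw [← Nat.primesBelow_card_eq_primeCounting']
  calc (Nat.primesBelow (M + 1)).card
      ≤ (Finset.range (m + 1) ∪
          (Finset.range (M + 1)).filter (fun p => Nat.Prime p ∧ m < p)).card := by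
        apply Finset.card_le_card
        intro p hp
        rw [Nat.mem_primesBelow] at hp
        rcases le_or_gt p m with h | h
        · exact Finset.mem_union_left _ (Finset.mem_range.2 (by omega))
        · exact Finset.mem_union_right _ (Finset.mem_filter.2 ⟨Finset.mem_range.2 hp.1, hp.2, h⟩)
    _ ≤ (m + 1) + _ := by
        refine (Finset.card_union_le _ _).trans ?_
        simp

lemma lemD (M N : ℕ) :
    Nat.primeCounting' (N + 1) ≤ Nat.primeCounting' (M + 1) +
      ((Finset.range (N + 1)).filter (fun p => Nat.Prime p ∧ M < p)).card := by
  rw [← Nat.primesBelow_card_eq_primeCounting', ← Nat.primesBelow_card_eq_primeCounting']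
  calc (Nat.primesBelow (N + 1)).card
      ≤ (Nat.primesBelow (M + 1) ∪
          (Finset.range (N + 1)).filter (fun p => Nat.Prime p ∧ M < p)).card := by
        apply Finset.card_le_card
        intro p hp
        rw [Nat.mem_primesBelow] at hp
        rcases le_or_gt p M with h | h
        · exact Finset.mem_union_left _ (Nat.mem_primesBelow.2 ⟨by omega, hp.2⟩)
        · exact Finset.mem_union_right _ (Finset.mem_filter.2 ⟨Finset.mem_range.2 hp.1, hp.2, h⟩)
    _ ≤ _ := Finset.card_union_le _ _


set_option maxHeartbeats 1000000 in
lemma lemE {x s k j c t : ℝ} (hx : 300 ≤ x) (hs_ge : x^2/4 ≤ s)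
    (hk0 : 0 ≤ k) (hj0 : 0 ≤ j) (hc0 : 0 ≤ c) (ht0 : 0 ≤ t)
    (klb : 8*(s*s) - 2 ≤ (k+1)*(3*(x+1))) (tub : t*(3*x-2) ≤ 4*(s*s))
    (hD : k ≤ j + c) (hC : j ≤ s + 1 + t) : s*s ≤ c*x := by
  have hs0 : (0:ℝ) < s := by nlinarith
  have hs1 : (1:ℝ) ≤ s := by nlinarith
  have hq1 : (0:ℝ) ≤ x * (3*x - 2) := by nlinarith
  have hq2 : (0:ℝ) ≤ x * (3*x + 3) := by nlinarith
  have hq3 : (0:ℝ) ≤ x * (3*x + 3) * (3*x - 2) := by nlinarith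
  have E1 : (8*(s*s) - 2) * (x*(3*x-2)) ≤ ((k+1) * (3*(x+1))) * (x*(3*x-2)) :=
    mul_le_mul_of_nonneg_right klb hq1
  have E2 : (t*(3*x-2)) * (x*(3*x+3)) ≤ (4*(s*s)) * (x*(3*x+3)) :=
    mul_le_mul_of_nonneg_right tub hq2
  have E3 : k * (x*(3*x+3)*(3*x-2)) ≤ (j+c) * (x*(3*x+3)*(3*x-2)) :=
    mul_le_mul_of_nonneg_right hD hq3
  have E4 : j * (x*(3*x+3)*(3*x-2)) ≤ (s+1+t) * (x*(3*x+3)*(3*x-2)) :=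
    mul_le_mul_of_nonneg_right hC hq3
  have p1 : (0:ℝ) ≤ 3*x^2 - 31*x + 6 := by nlinarith
  have c1 : 3*x*(x+1)*(3*x-2) ≤ (x^2/8)*(3*x^2-31*x+6) := by nlinarith
  have c2 : (3*x+5)*(x*(3*x-2)) + 3*x*(x+1)*(3*x-2) ≤ (x^2/8)*(3*x^2-31*x+6) := by nlinarith
  have d1 : s * (3*x*(x+1)*(3*x-2)) ≤ s * ((x^2/8)*(3*x^2-31*x+6)) :=
    mul_le_mul_of_nonneg_left c1 hs0.le
  have d2 : (3*x+5)*(x*(3*x-2)) + 3*x*(x+1)*(3*x-2) ≤ s * ((x^2/8)*(3*x^2-31*x+6)) := by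
    calc (3*x+5)*(x*(3*x-2)) + 3*x*(x+1)*(3*x-2) ≤ (x^2/8)*(3*x^2-31*x+6) := c2
      _ = 1 * ((x^2/8)*(3*x^2-31*x+6)) := by ring
      _ ≤ s * ((x^2/8)*(3*x^2-31*x+6)) := by
          apply mul_le_mul_of_nonneg_right hs1 (by positivity)
  have d3 : s * ((x^2/4)*(3*x^2-31*x+6)) ≤ s * s * (3*x^2-31*x+6) := by
    have := mul_le_mul_of_nonneg_right hs_ge (mul_nonneg hs0.le p1)
    calc s * ((x^2/4)*(3*x^2-31*x+6)) = x^2/4 * (s * (3*x^2-31*x+6)) := by ring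
      _ ≤ s * (s * (3*x^2-31*x+6)) := this
      _ = s * s * (3*x^2-31*x+6) := by ring
  have E5 : (3*x+5)*(x*(3*x-2)) + (s+1)*(3*x*(x+1)*(3*x-2)) ≤ (s*s)*(3*x^2-31*x+6) := by
    linarith [d1, d2, d3]
  have E6 : (s*s)*((3*x+3)*(3*x-2)) ≤ (c*x)*((3*x+3)*(3*x-2)) := by linarith [E1, E2, E3, E4, E5]
  have hq4 : (0:ℝ) < (3*x+3)*(3*x-2) := by nlinarith
  exact le_of_mul_le_mul_right E6 hq4

set_option maxHeartbeats 1000000 in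
theorem stmt_13 :
    ∃ x₀ : ℝ, 1 ≤ x₀ ∧ ∀ x : ℝ, x₀ ≤ x →
      (8 : ℝ) ^ x / x ≤
        (((Finset.range (⌊(8 : ℝ) ^ (x + 1)⌋₊ + 1)).filter
            (fun p => Nat.Prime p ∧ (8 : ℝ) ^ x < (p : ℝ) ∧ (p : ℝ) ≤ (8 : ℝ) ^ (x + 1))).card : ℝ) := by
  refine ⟨300, by norm_num, ?_⟩
  intro x hx
  have hx0 : (0:ℝ) < x := by linarith
  have h8 : (0:ℝ) < 8 := by norm_num
  set y := (8:ℝ)^x with hy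
  set s := (8:ℝ)^(x/2) with hs
  have hy0 : 0 < y := rpow_pos_of_pos h8 x
  have hs0 : 0 < s := rpow_pos_of_pos h8 _
  have hss : s * s = y := by
    rw [hs, hy, ← rpow_add h8]; ring_nf
  have hL : (0.6931471803 : ℝ) < Real.log 2 := Real.log_two_gt_d9
  have hL0 : (0:ℝ) < Real.log 2 := by linarith
  have hlog8 : Real.log 8 = 3 * Real.log 2 := by
    rw [show (8:ℝ) = 2^3 by norm_num, Real.log_pow]; push_cast; ring
  -- s is big
  have hs_ge : x^2/4 ≤ s := by
    have hrw : s = Real.exp (Real.log 8 * (x/2)) := by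
      rw [hs, Real.rpow_def_of_pos h8]
    have ht0 : (0:ℝ) ≤ Real.log 8 * (x/2) / 2 := by
      rw [hlog8]; positivity
    have h1 : Real.exp (Real.log 8 * (x/2)) =
        Real.exp (Real.log 8 * (x/2) / 2) ^ 2 := by
      rw [← Real.exp_nat_mul]; congr 1; push_cast; ring
    have h2 : 1 + Real.log 8 * (x/2) / 2 ≤ Real.exp (Real.log 8 * (x/2) / 2) := by
      have := Real.add_one_le_exp (Real.log 8 * (x/2) / 2); linarith
    have h3 : x/2 ≤ 1 + Real.log 8 * (x/2) / 2 := by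
      rw [hlog8]; nlinarith
    have h4 : (x/2)^2 ≤ Real.exp (Real.log 8 * (x/2) / 2) ^ 2 := by
      have := h3.trans h2
      nlinarith [Real.exp_pos (Real.log 8 * (x/2) / 2)]
    rw [hrw, h1]; nlinarith
  have hs2 : (2:ℝ) ≤ s := by nlinarith
  set N := ⌊(8:ℝ)^(x+1)⌋₊ with hNdef
  set M := ⌊y⌋₊ with hMdef
  set m := ⌊s⌋₊ with hmdef
  have h81 : (8:ℝ)^(x+1) = 8 * y := by
    rw [hy, rpow_add h8, rpow_one]; ring
  have h81nn : (0:ℝ) ≤ (8:ℝ)^(x+1) := by positivity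
  -- floor bounds
  have hNub : (N:ℝ) ≤ 8 * y := by rw [← h81]; exact Nat.floor_le h81nn
  have hNlb : 8 * y - 1 < (N:ℝ) := by
    rw [← h81]; have := Nat.lt_floor_add_one ((8:ℝ)^(x+1)); linarith
  have hMub : (M:ℝ) ≤ y := Nat.floor_le hy0.le
  have hmub : (m:ℝ) ≤ s := Nat.floor_le hs0.le
  have hmlb : s - 1 < (m:ℝ) := by
    have := Nat.lt_floor_add_one s; linarith
  have hm2 : 2 ≤ (m:ℝ) := by nlinarith
  have hN8 : 8 ≤ N := by
    have : (8:ℝ) ≤ (N:ℝ) := by nlinarith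
    exact_mod_cast this
  -- rewrite the filter
  have hset : (Finset.range (N + 1)).filter
      (fun p => Nat.Prime p ∧ (8:ℝ)^x < (p:ℝ) ∧ (p:ℝ) ≤ (8:ℝ)^(x+1))
      = (Finset.range (N + 1)).filter (fun p => Nat.Prime p ∧ M < p) := by
    apply Finset.filter_congr
    intro p hp
    rw [Finset.mem_range] at hp
    have hp' : (p:ℝ) ≤ (8:ℝ)^(x+1) := (Nat.le_floor_iff h81nn).1 (by omega)
    have hflr : (M < p) ↔ (y < (p:ℝ)) := Nat.floor_lt hy0.le
    rw [← hy]
    constructor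
    · rintro ⟨h1, h2, _⟩; exact ⟨h1, hflr.2 h2⟩
    · rintro ⟨h1, h2⟩; exact ⟨h1, hflr.1 h2, hp'⟩
  rw [hset]
  -- nat-land facts
  set k := Nat.primeCounting' (N + 1) with hk
  set j := Nat.primeCounting' (M + 1) with hj
  set c := ((Finset.range (N + 1)).filter (fun p => Nat.Prime p ∧ M < p)).card with hc
  set t := ((Finset.range (M + 1)).filter (fun p => Nat.Prime p ∧ m < p)).card with ht
  have hA := lemA N hN8
  have hD : k ≤ j + c := lemD M N
  have hC : j ≤ m + 1 + t := lemC m M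
  have hB := lemB m M
  -- real conversions
  have klb : 8 * y - 2 ≤ ((k:ℝ) + 1) * (3 * (x + 1)) := by
    have hAc : ((2:ℝ))^(N-1) ≤ (N:ℝ)^(k+1) := by exact_mod_cast hA
    have hlog := Real.log_le_log (by positivity) hAc
    rw [Real.log_pow, Real.log_pow] at hlog
    have hcast : ((N - 1 : ℕ) : ℝ) = (N:ℝ) - 1 := by
      rw [Nat.cast_sub (by omega)]; norm_num
    rw [hcast] at hlog
    have hlogN : Real.log (N:ℝ) ≤ 3 * (x + 1) * Real.log 2 := by
      have h1 : Real.log (N:ℝ) ≤ Real.log ((8:ℝ)^(x+1)) := by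
        apply Real.log_le_log (by positivity)
        rw [h81]; exact hNub
      have h2 : Real.log ((8:ℝ)^(x+1)) = (x+1) * Real.log 8 := Real.log_rpow h8 _
      rw [h2, hlog8] at h1; linarith
    have hkpos : (0:ℝ) ≤ ((k:ℝ) + 1) := by positivity
    have step1 : (8 * y - 2) * Real.log 2 ≤ ((N:ℝ) - 1) * Real.log 2 :=
      mul_le_mul_of_nonneg_right (by linarith) hL0.le
    have step2 : ((N:ℝ) - 1) * Real.log 2 ≤ ((k:ℝ) + 1) * Real.log (N:ℝ) := by
      push_cast at hlog; linarith
    have step3 : ((k:ℝ) + 1) * Real.log (N:ℝ) ≤ ((k:ℝ) + 1) * (3 * (x + 1) * Real.log 2) :=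
      mul_le_mul_of_nonneg_left hlogN hkpos
    have : (8 * y - 2) * Real.log 2 ≤ (((k:ℝ) + 1) * (3 * (x + 1))) * Real.log 2 := by
      nlinarith
    exact le_of_mul_le_mul_right this hL0
  have tub : (t:ℝ) * (3 * x - 2) ≤ 4 * y := by
    have hBc : ((m:ℝ))^t ≤ (4:ℝ)^M := by exact_mod_cast hB
    have hlog := Real.log_le_log (by positivity) hBc
    rw [Real.log_pow, Real.log_pow] at hlog
    have hlog4 : Real.log 4 = 2 * Real.log 2 := by
      rw [show (4:ℝ) = 2^2 by norm_num, Real.log_pow]; push_cast; ring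
    have hlogm : (3 * x / 2 - 1) * Real.log 2 ≤ Real.log (m:ℝ) := by
      have h1 : Real.log (s / 2) ≤ Real.log (m:ℝ) := by
        apply Real.log_le_log (by positivity)
        linarith
      have h2 : Real.log (s / 2) = Real.log s - Real.log 2 :=
        Real.log_div hs0.ne' (by norm_num)
      have h3 : Real.log s = (x/2) * Real.log 8 := Real.log_rpow h8 _
      rw [h2, h3, hlog8] at h1; linarith
    have hMy : (M:ℝ) * Real.log 4 ≤ y * (2 * Real.log 2) := by
      rw [hlog4]
      have : (0:ℝ) ≤ 2 * Real.log 2 := by linarith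
      nlinarith
    have ht0' : (0:ℝ) ≤ (t:ℝ) := Nat.cast_nonneg _
    have step1 : (t:ℝ) * ((3 * x / 2 - 1) * Real.log 2) ≤ (t:ℝ) * Real.log (m:ℝ) :=
      mul_le_mul_of_nonneg_left hlogm ht0'
    have key : ((t:ℝ) * (3 * x / 2 - 1)) * Real.log 2 ≤ (2 * y) * Real.log 2 := by
      nlinarith
    have := le_of_mul_le_mul_right key hL0
    linarith
  have hDc : (k:ℝ) ≤ (j:ℝ) + (c:ℝ) := by exact_mod_cast hD
  have hCc : (j:ℝ) ≤ s + 1 + (t:ℝ) := by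
    have : (j:ℝ) ≤ (m:ℝ) + 1 + (t:ℝ) := by exact_mod_cast hC
    linarith
  -- final arithmetic
  rw [div_le_iff₀ hx0]
  rw [← hss] at klb tub
  have key := lemE hx hs_ge (Nat.cast_nonneg k) (Nat.cast_nonneg j) (Nat.cast_nonneg c)
    (Nat.cast_nonneg t) klb tub hDc hCc
  linarith [hss]
end

section
/- Fix x₀ ≥ 1 and ε > 0. Suppose X ⊆ ℝ has the property that for every integer n ≥ x₀ there exist x, y ∈ X ∩ [n, n+1) with ε⁴ < y − x < ε. Let k ≥ ⌈2/ε⁴⌉. Then for all integers n₁, …, n_k ≥ x₀ there exist z, z₁, …, z_k ∈ X such that z_i ∈ [n_i, n_i + 1) for each i, and z₁ + ⋯ + z_k ∈ [z, z + ε). -/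
open Finset Set

theorem stmt_16 (x₀ : ℝ) (hx₀ : 1 ≤ x₀) (ε : ℝ) (hε : 0 < ε) (X : Set ℝ)
    (hX : ∀ n : ℕ, x₀ ≤ (n : ℝ) →
      ∃ x ∈ X, ∃ y ∈ X, x ∈ Set.Ico (n : ℝ) (n + 1) ∧ y ∈ Set.Ico (n : ℝ) (n + 1) ∧
        ε ^ 4 < y - x ∧ y - x < ε)
    (k : ℕ) (hk : ⌈2 / ε ^ 4⌉₊ ≤ k)
    (nv : Fin k → ℕ) (hnv : ∀ i, x₀ ≤ (nv i : ℝ)) :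
    ∃ z ∈ X, ∃ zv : Fin k → ℝ,
      (∀ i, zv i ∈ X ∧ zv i ∈ Set.Ico ((nv i : ℝ)) ((nv i : ℝ) + 1)) ∧
      (∑ i, zv i) ∈ Set.Ico z (z + ε) := by
  classical
  have hε4 : 0 < ε ^ 4 := by positivity
  have hk1 : 1 ≤ k := le_trans (Nat.one_le_ceil_iff.mpr (by positivity)) hk
  have hkε : 2 ≤ (k : ℝ) * ε ^ 4 := by
    have h1 : 2 / ε ^ 4 ≤ (k : ℝ) := le_trans (Nat.le_ceil _) (by exact_mod_cast hk)
    rw [div_le_iff₀ hε4] at h1; linarith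
  choose xf hxX yf hyX hxI hyI hlo hhi using fun i => hX (nv i) (hnv i)
  have hxy : ∀ i, xf i < yf i := fun i => by have := hlo i; linarith
  set S0 : ℝ := ∑ i, xf i with hS0
  have hS0pos : (0:ℝ) ≤ S0 := Finset.sum_nonneg fun i _ => by
    have := (hxI i).1; have := hnv i; linarith
  set m : ℕ := ⌊S0⌋₊ + 1 with hm
  have hmS0 : S0 < (m : ℝ) := by
    have := Nat.lt_floor_add_one S0; push_cast [hm]; linarith
  have hmS0' : (m : ℝ) ≤ S0 + 1 := by
    have := Nat.floor_le hS0pos; push_cast [hm]; linarith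
  have hmx₀ : x₀ ≤ (m : ℝ) := by
    have h0 : x₀ ≤ S0 := by
      calc x₀ = ∑ _i : Fin 1, x₀ := by simp
        _ ≤ S0 := by
          rw [hS0]
          have : S0 = ∑ i ∈ Finset.univ, xf i := rfl
          have hterm : ∀ i : Fin k, x₀ ≤ xf i := fun i => by
            have := (hxI i).1; have := hnv i; linarith
          calc ∑ _i : Fin 1, x₀ = x₀ := by simp
            _ ≤ xf ⟨0, hk1⟩ := hterm _
            _ ≤ ∑ i, xf i := Finset.single_le_sum (fun i _ => by
                have := (hxI i).1; have := hnv i; linarith) (Finset.mem_univ _)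
    linarith
  obtain ⟨z, hzX, _, _, hzI, _, _, _⟩ := hX m hmx₀
  -- the walking sums
  set S : ℕ → ℝ := fun t => ∑ i : Fin k, if (i : ℕ) < t then yf i else xf i with hS
  have hSstep : ∀ t, t < k → ∀ ht : t < k, S (t + 1) = S t + (yf ⟨t, ht⟩ - xf ⟨t, ht⟩) := by
    intro t _ ht
    have : S (t + 1) - S t =
        ∑ i : Fin k, ((if (i : ℕ) < t + 1 then yf i else xf i) - (if (i : ℕ) < t then yf i else xf i)) := by
      rw [Finset.sum_sub_distrib]
    rw [Finset.sum_eq_single (⟨t, ht⟩ : Fin k)] at this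
    · simp at this; linarith
    · intro i _ hne
      have hne' : (i : ℕ) ≠ t := fun h => hne (Fin.ext h)
      rcases lt_or_ge (i : ℕ) t with h | h
      · simp [h, Nat.lt_succ_of_lt h]
      · have h1 : ¬ (i : ℕ) < t := not_lt.mpr h
        have h2 : ¬ (i : ℕ) < t + 1 := by omega
        simp [h1, h2]
    · simp
  have hS0eq : S 0 = S0 := by simp [hS, hS0]
  have hSk : S k = ∑ i, yf i := by
    simp only [hS]
    exact Finset.sum_congr rfl fun i _ => by simp [i.isLt]
  have hSkbig : S0 + 2 ≤ S k := by
    rw [hSk]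
    have : ∑ i, (xf i + ε ^ 4) ≤ ∑ i, yf i :=
      Finset.sum_le_sum fun i _ => by have := hlo i; linarith
    rw [Finset.sum_add_distrib] at this
    simp only [Finset.sum_const, Finset.card_univ, Fintype.card_fin, nsmul_eq_mul] at this
    linarith [hkε, this]
  have hzm : (m : ℝ) ≤ z := hzI.1
  have hzm' : z < (m : ℝ) + 1 := hzI.2
  have hzSk : z ≤ S k := by linarith
  have hP : ∃ t, z ≤ S t := ⟨k, hzSk⟩
  set t₀ := Nat.find hP with ht₀
  have ht₀P : z ≤ S t₀ := Nat.find_spec hP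
  have ht₀k : t₀ ≤ k := Nat.find_le hzSk
  have ht₀pos : 0 < t₀ := by
    rcases Nat.eq_zero_or_pos t₀ with h | h
    · exfalso
      have := ht₀P
      rw [h, hS0eq] at this
      linarith
    · exact h
  obtain ⟨s, hs⟩ : ∃ s, t₀ = s + 1 := ⟨t₀ - 1, by omega⟩
  have hsk : s < k := by omega
  have hSs : S s < z := by
    have := Nat.find_min hP (show s < t₀ by omega)
    linarith [not_le.mp this]
  have hstep := hSstep s hsk hsk
  have hSt₀lt : S t₀ < z + ε := by
    rw [hs, hstep]
    have := hhi ⟨s, hsk⟩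
    linarith
  refine ⟨z, hzX, fun i => if (i : ℕ) < t₀ then yf i else xf i, fun i => ?_, ht₀P, hSt₀lt⟩
  simp only []
  split_ifs
  · exact ⟨hyX i, hyI i⟩
  · exact ⟨hxX i, hxI i⟩
end
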